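/- For every t ∈ [0,1] the inequality 3t/(2+t) ≥ −1 + √(1 + 3t) holds, with equality if and only if t = 0 or t = 1. -/
import Mathlib


open MeasureTheory

/-- A Pickands dependence function: a convex function on `[0,1]` with
`max (1 - t) t ≤ A t ≤ 1` for all `t ∈ [0,1]`. -/
def IsPickands (A : ℝ → ℝ) : Prop :=
  ConvexOn ℝ (Set.Icc (0 : ℝ) 1) A ∧
    ∀ t ∈ Set.Icc (0 : ℝ) 1, max (1 - t) t ≤ A t ∧ A t ≤ 1

/-- The right-hand derivative `D⁺A` of `A` on `[0,1)`, extended constantly by `D⁺A 0`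
to the left of `0` and by the value `1` on `[1,∞)` (the integrand of Kendall's tau
vanishes at the endpoints, so these conventions do not affect it). -/
noncomputable def pickandsD (A : ℝ → ℝ) (t : ℝ) : ℝ :=
  if t < 0 then derivWithin A (Set.Ioi (0 : ℝ)) 0
  else if t < 1 then derivWithin A (Set.Ioi t) t
  else 1

open scoped Classical in
/-- Kendall's tau of a Pickands dependence function `A`:
`τ(A) = ∫_{[0,1]} t (1 - t) / A t  d(D⁺A)(t)`, the integral being taken with respect to
the Lebesgue–Stieltjes measure induced by the nondecreasing right-continuous
function `D⁺A`. (For a Pickands function `A`, `pickandsD A` is monotone, so the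
junk value `0` of the `else` branch is never used.) -/
noncomputable def kendallTau (A : ℝ → ℝ) : ℝ :=
  if h : Monotone (pickandsD A) then
    ∫ t in Set.Icc (0 : ℝ) 1, t * (1 - t) / A t ∂h.stieltjesFunction.measure
  else 0

/-- Spearman's rho of a Pickands dependence function:
`ρ(A) = 12 ∫₀¹ 1 / (1 + A t)² dt - 3`. -/
noncomputable def spearmanRho (A : ℝ → ℝ) : ℝ :=
  12 * (∫ t in (0 : ℝ)..1, 1 / (1 + A t) ^ 2) - 3

/-- `A` is affine on the interval `[p,q]`. -/
def AffineOnIcc (A : ℝ → ℝ) (p q : ℝ) : Prop :=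
  ∃ a b : ℝ, ∀ t ∈ Set.Icc p q, A t = a * t + b

/-- The triangular Pickands dependence function `T_{x₁,y₁}`: affine on `[0,x₁]` and on
`[x₁,1]` with `T 0 = T 1 = 1` and `T x₁ = y₁`. -/
noncomputable def triangular (x₁ y₁ : ℝ) (t : ℝ) : ℝ :=
  if t ≤ x₁ then 1 + (y₁ - 1) * t / x₁
  else y₁ + (1 - y₁) * (t - x₁) / (1 - x₁)

/-- The functional `Δ(C,D) = ρ(C) - ρ(D) - (3τ(C)/(2+τ(C)) - 3τ(D)/(2+τ(D)))`. -/
noncomputable def Delta (C D : ℝ → ℝ) : ℝ :=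
  spearmanRho C - spearmanRho D -
    (3 * kendallTau C / (2 + kendallTau C) - 3 * kendallTau D / (2 + kendallTau D))

/-- for every `t ∈ [0,1]`, `3t/(2+t) ≥ -1 + √(1+3t)`, with equality
iff `t = 0` or `t = 1`. -/
theorem bound_comparison (t : ℝ) (ht : t ∈ Set.Icc (0 : ℝ) 1) :
    3 * t / (2 + t) ≥ -1 + Real.sqrt (1 + 3 * t) ∧
      (3 * t / (2 + t) = -1 + Real.sqrt (1 + 3 * t) ↔ t = 0 ∨ t = 1) := by

  obtain ⟨ht0, ht1⟩ := ht
  have h2t : (0:ℝ) < 2 + t := by linarith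
  have hnn : (0:ℝ) ≤ 1 + 3 * t := by linarith
  have hsq : Real.sqrt (1 + 3 * t) ^ 2 = 1 + 3 * t := Real.sq_sqrt hnn
  have hge : Real.sqrt (1 + 3 * t) ≤ 3 * t / (2 + t) + 1 := by
    have hy : (0:ℝ) ≤ 3 * t / (2 + t) + 1 := by positivity
    have hx : 1 + 3 * t ≤ (3 * t / (2 + t) + 1) ^ 2 := by
      rw [div_add' _ _ _ (ne_of_gt h2t), div_pow, le_div_iff₀ (by positivity)]
      nlinarith [sq_nonneg t, mul_nonneg (mul_nonneg ht0 ht0) (sub_nonneg.mpr ht1)]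
    calc Real.sqrt (1 + 3 * t) ≤ Real.sqrt ((3 * t / (2 + t) + 1) ^ 2) :=
          Real.sqrt_le_sqrt hx
      _ = 3 * t / (2 + t) + 1 := Real.sqrt_sq hy
  constructor
  · linarith
  · constructor
    · intro h
      have hs : Real.sqrt (1 + 3 * t) = 3 * t / (2 + t) + 1 := by linarith
      have : 1 + 3 * t = (3 * t / (2 + t) + 1) ^ 2 := by rw [← hs, hsq]
      have h3 : t ^ 2 * (1 - t) = 0 := by
        field_simp at this
        nlinarith [this]
      rcases mul_eq_zero.mp h3 with h4 | h4
      · left; nlinarith [sq_nonneg t]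
      · right; linarith
    · rintro (rfl | rfl)
      · norm_num [Real.sqrt_one]
      · rw [show (1:ℝ) + 3 * 1 = 2 ^ 2 by norm_num,
          Real.sqrt_sq (by norm_num : (0:ℝ) ≤ 2)]
        norm_num
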